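/- Let H = ℓ² ⊕₂ L²[0,1] be the Hilbert lattice direct sum, and let C be the operator on H given by C(x, f) = (x, 0) (the band projection onto the ℓ² component). Then C is a self-commutator of a positive operator: there exists a positive bounded linear operator A on H such that C = A*A − AA*. -/

import Mathlib

open MeasureTheory ContinuousLinearMap

/-- An element of the Hilbert lattice `ℓ² ⊕₂ L²[0,1]` is positive iff its `ℓ²` component is
coordinatewise nonnegative and its `L²[0,1]` component is a.e. nonnegative. -/
def IsPosPairL2 (z : WithLp 2
    ((lp (fun _ : ℕ => ℝ) 2) × (Lp ℝ 2 (volume : Measure (Set.Icc (0:ℝ) 1))))) : Prop :=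
  (∀ n, 0 ≤ (WithLp.equiv 2 _ z).1 n) ∧ 0 ≤ (WithLp.equiv 2 _ z).2

open scoped ENNReal

noncomputable section

abbrev LL : Type := Lp ℝ 2 (volume : Measure (Set.Icc (0:ℝ) 1))
abbrev ell : Type := lp (fun _ : ℕ => ℝ) 2

namespace SelfComm

def J (m : ℕ) : Set ℝ := Set.Ioc ((1/2:ℝ)^(m+1)) ((1/2:ℝ)^m)

def S (m : ℕ) : Set (Set.Icc (0:ℝ) 1) := Subtype.val ⁻¹' J m

lemma measurableS (m : ℕ) : MeasurableSet (S m) :=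
  measurableSet_Ioc.preimage measurable_subtype_coe

lemma J_subset (m : ℕ) : J m ⊆ Set.Icc (0:ℝ) 1 := by
  intro x hx
  obtain ⟨h1, h2⟩ := hx
  constructor
  · exact le_of_lt (lt_of_le_of_lt (by positivity) h1)
  · exact h2.trans (pow_le_one₀ (by norm_num) (by norm_num))

lemma volS (m : ℕ) : volume (S m) = ENNReal.ofReal ((1/2:ℝ)^(m+1)) := by
  have h : (volume : Measure (Set.Icc (0:ℝ) 1)) = (volume : Measure ℝ).comap Subtype.val :=
    unitInterval.volume_def
  rw [S, h, MeasurableEmbedding.comap_apply (MeasurableEmbedding.subtype_coe measurableSet_Icc)]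
  rw [Subtype.image_preimage_coe, Set.inter_eq_right.mpr (J_subset m)]
  rw [J, Real.volume_Ioc]
  congr 1
  ring

lemma volS_ne_top (m : ℕ) : volume (S m) ≠ ∞ := by
  rw [volS]; exact ENNReal.ofReal_ne_top

lemma volS_toReal (m : ℕ) : (volume (S m)).toReal = (1/2:ℝ)^(m+1) := by
  rw [volS, ENNReal.toReal_ofReal (by positivity)]

lemma S_disjoint {m m' : ℕ} (h : m ≠ m') : Disjoint (S m) (S m') := by
  have key : ∀ a b : ℕ, a < b → Disjoint (J a) (J b) := by
    intro a b hab
    rw [J, J, Set.Ioc_disjoint_Ioc]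
    refine le_trans (min_le_right _ _) (le_trans ?_ (le_max_left _ _))
    exact pow_le_pow_of_le_one (by norm_num) (by norm_num) (by omega)
  have hJ : Disjoint (J m) (J m') := by
    rcases h.lt_or_gt with h' | h'
    · exact key m m' h'
    · exact (key m' m h').symm
  exact hJ.preimage _

end SelfComm
section part2
namespace SelfComm

/-- normalizing constant -/
def cst (m : ℕ) : ℝ := ((1/2:ℝ)^(m+1)) ^ (-(1/2) : ℝ)

lemma cst_pos (m : ℕ) : 0 < cst m := Real.rpow_pos_of_pos (by positivity) _

/-- the orthonormal family of normalized indicators -/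
def e (m : ℕ) : LL := indicatorConstLp 2 (measurableS m) (volS_ne_top m) (cst m)

lemma e_coeFn (m : ℕ) : ⇑(e m) =ᵐ[volume] (S m).indicator (fun _ => cst m) :=
  indicatorConstLp_coeFn

lemma norm_e (m : ℕ) : ‖e m‖ = 1 := by
  rw [e, norm_indicatorConstLp (by norm_num) (by norm_num)]
  rw [measureReal_def, volS_toReal]
  have h2 : (2 : ℝ≥0∞).toReal = (2:ℝ) := by simp
  rw [h2]
  rw [Real.norm_eq_abs, abs_of_pos (cst_pos m), cst]
  rw [← Real.rpow_add (by positivity)]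
  norm_num

lemma e_nonneg (m : ℕ) : 0 ≤ e m := by
  rw [← Lp.coeFn_nonneg]
  filter_upwards [e_coeFn m] with x hx
  rw [hx]
  exact Set.indicator_nonneg (fun _ _ => (cst_pos m).le) x

open scoped InnerProductSpace in
lemma inner_e_e {m m' : ℕ} (h : m ≠ m') : ⟪e m, e m'⟫_ℝ = 0 := by
  rw [L2.inner_def]
  have : ∀ᵐ x ∂(volume : Measure (Set.Icc (0:ℝ) 1)), ⟪e m x, e m' x⟫_ℝ = 0 := by
    filter_upwards [e_coeFn m, e_coeFn m'] with x hx hx'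
    rw [hx, hx', RCLike.inner_apply]
    by_cases hm : x ∈ S m
    · have : x ∉ S m' := fun hc => (S_disjoint h).le_bot ⟨hm, hc⟩
      simp [Set.indicator_of_notMem this]
    · simp [Set.indicator_of_notMem hm]
  rw [integral_congr_ae this, integral_zero]

lemma orthonormal_e : Orthonormal ℝ e :=
  ⟨norm_e, fun _ _ h => inner_e_e h⟩

open scoped InnerProductSpace in
lemma inner_e_nonneg {f : LL} (hf : 0 ≤ f) (m : ℕ) : 0 ≤ ⟪e m, f⟫_ℝ := by
  rw [L2.inner_def]
  refine integral_nonneg_of_ae ?_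
  have hf' : (0:Set.Icc (0:ℝ) 1 → ℝ) ≤ᵐ[volume] f := (Lp.coeFn_nonneg f).mpr hf
  filter_upwards [e_coeFn m, hf'] with x hx hfx
  rw [RCLike.inner_apply, hx]
  exact mul_nonneg hfx (Set.indicator_nonneg (fun _ _ => (cst_pos m).le) x)

end SelfComm
end part2
section part3
namespace SelfComm
open scoped InnerProductSpace
open ContinuousLinearMap

/-- the synthesis isometry ℓ² → L² -/
def Phi : ell →ₗᵢ[ℝ] LL := orthonormal_e.orthogonalFamily.linearIsometry

def EPhi : ell →L[ℝ] LL := Phi.toContinuousLinearMap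

def Psi : LL →L[ℝ] ell := adjoint EPhi

lemma EPhi_apply (x : ell) : EPhi x = Phi x := rfl

lemma Phi_hasSum (x : ell) : HasSum (fun m => x m • e m) (Phi x) :=
  orthonormal_e.orthogonalFamily.hasSum_linearIsometry x

lemma Phi_single (m : ℕ) : Phi (lp.single 2 m (1:ℝ)) = e m := by
  rw [Phi, orthonormal_e.orthogonalFamily.linearIsometry_apply_single]
  simp [LinearIsometry.toSpanSingleton]

lemma smul_nonneg_LL {c : ℝ} (hc : 0 ≤ c) {f : LL} (hf : 0 ≤ f) : 0 ≤ c • f := by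
  rw [← Lp.coeFn_nonneg]
  have h1 : ⇑(c • f) =ᵐ[volume] c • ⇑f := Lp.coeFn_smul c f
  have h2 : (0:Set.Icc (0:ℝ) 1 → ℝ) ≤ᵐ[volume] f := (Lp.coeFn_nonneg f).mpr hf
  filter_upwards [h1, h2] with x hx hfx
  rw [hx]
  exact mul_nonneg hc hfx

lemma Phi_nonneg {x : ell} (hx : ∀ m, 0 ≤ x m) : 0 ≤ Phi x := by
  refine hasSum_le (fun m => ?_) hasSum_zero (Phi_hasSum x)
  exact smul_nonneg_LL (hx m) (e_nonneg m)

lemma Psi_apply_coord (f : LL) (m : ℕ) : Psi f m = ⟪e m, f⟫_ℝ := by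
  have h1 : ⟪lp.single 2 m (1:ℝ), Psi f⟫_ℝ = Psi f m := by
    rw [lp.inner_single_left]
    simp [RCLike.inner_apply]
  rw [← h1, Psi, ContinuousLinearMap.adjoint_inner_right, ← Phi_single m, EPhi_apply]

lemma Psi_nonneg {f : LL} (hf : 0 ≤ f) (m : ℕ) : 0 ≤ Psi f m := by
  rw [Psi_apply_coord]
  exact inner_e_nonneg hf m

lemma Psi_Phi (y : ell) : Psi (EPhi y) = y := by
  refine ext_inner_left ℝ (fun u => ?_)
  rw [Psi, ContinuousLinearMap.adjoint_inner_right, EPhi_apply, EPhi_apply,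
    Phi.inner_map_map]

end SelfComm
end part3
section part4
namespace SelfComm
open scoped InnerProductSpace

def interleave (x y : ℕ → ℝ) : ℕ → ℝ := fun n => if n % 2 = 0 then x (n/2) else y (n/2)

lemma interleave_even (x y : ℕ → ℝ) (k : ℕ) : interleave x y (2*k) = x k := by
  simp [interleave, Nat.mul_mod_right, Nat.mul_div_cancel_left k (by norm_num : 0 < 2)]

lemma interleave_odd (x y : ℕ → ℝ) (k : ℕ) : interleave x y (2*k+1) = y k := by
  have h1 : (2*k+1) % 2 = 1 := by omega
  have h2 : (2*k+1) / 2 = k := by omega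
  simp [interleave, h1, h2]

lemma htoReal : (0:ℝ) < (2:ℝ≥0∞).toReal := by simp

lemma memℓp_interleave (x y : ell) : Memℓp (interleave x y) 2 := by
  apply memℓp_gen
  apply Summable.even_add_odd
  · apply Summable.congr ((lp.memℓp x).summable htoReal)
    intro k; rw [interleave_even]
  · apply Summable.congr ((lp.memℓp y).summable htoReal)
    intro k; rw [interleave_odd]

lemma memℓp_even (c : ell) : Memℓp (fun k => (c : ℕ → ℝ) (2*k)) 2 := by
  apply memℓp_gen
  exact ((lp.memℓp c).summable htoReal).comp_injective (fun a b h => by omega)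

lemma memℓp_odd (c : ell) : Memℓp (fun k => (c : ℕ → ℝ) (2*k+1)) 2 := by
  apply memℓp_gen
  exact ((lp.memℓp c).summable htoReal).comp_injective (fun a b h => by omega)

/-- the interleaving linear equivalence -/
def ShL : WithLp 2 (ell × ell) ≃ₗ[ℝ] ell where
  toFun z := ⟨interleave z.fst z.snd, memℓp_interleave z.fst z.snd⟩
  invFun c := WithLp.toLp 2 ((⟨fun k => (c : ℕ → ℝ) (2*k), memℓp_even c⟩ : ell),
               (⟨fun k => (c : ℕ → ℝ) (2*k+1), memℓp_odd c⟩ : ell))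
  left_inv z := by
    apply (WithLp.equiv 2 _).injective
    refine Prod.ext ?_ ?_
    · apply lp.ext; funext k
      exact interleave_even _ _ k
    · apply lp.ext; funext k
      exact interleave_odd _ _ k
  right_inv c := by
    apply lp.ext; funext n
    show interleave _ _ n = _
    rcases Nat.even_or_odd n with ⟨k, hk⟩ | ⟨k, hk⟩
    · subst hk; rw [show k + k = 2 * k by ring, interleave_even]; rfl
    · subst hk; rw [interleave_odd]; rfl
  map_add' z w := by
    apply lp.ext; funext n
    show interleave _ _ n = interleave _ _ n + interleave _ _ n
    unfold interleave
    split <;> simp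
  map_smul' r z := by
    apply lp.ext; funext n
    show interleave _ _ n = r * interleave _ _ n
    unfold interleave
    split <;> simp

lemma ShL_norm (z : WithLp 2 (ell × ell)) : ‖ShL z‖ = ‖z‖ := by
  rw [← pow_left_inj₀ (norm_nonneg _) (norm_nonneg _) (two_ne_zero)]
  have hsq : ∀ w : ell, ‖w‖ ^ (2:ℕ) = ∑' n, ‖(w : ℕ → ℝ) n‖ ^ (2:ℕ) := by
    intro w
    have := lp.norm_rpow_eq_tsum htoReal w
    have h2 : (2:ℝ≥0∞).toReal = ((2:ℕ):ℝ) := by simp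
    rw [h2] at this
    simpa [Real.rpow_natCast] using this
  rw [WithLp.prod_norm_sq_eq_of_L2, hsq, hsq, hsq]
  rw [← tsum_even_add_odd]
  · congr 1
    · exact tsum_congr (fun k => by rw [show ((ShL z : ell) : ℕ → ℝ) (2*k) = z.fst k from
        interleave_even _ _ k])
    · exact tsum_congr (fun k => by rw [show ((ShL z : ell) : ℕ → ℝ) (2*k+1) = z.snd k from
        interleave_odd _ _ k])
  · apply Summable.congr ((lp.memℓp (z.fst : ell)).summable htoReal)
    intro k
    rw [show (((ShL z : ell)) : ℕ → ℝ) (2*k) = z.fst k from interleave_even _ _ k]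
    simp [Real.rpow_natCast]
  · apply Summable.congr ((lp.memℓp (z.snd : ell)).summable htoReal)
    intro k
    rw [show (((ShL z : ell)) : ℕ → ℝ) (2*k+1) = z.snd k from interleave_odd _ _ k]
    simp [Real.rpow_natCast]

/-- the interleaving isometry -/
def Sh : WithLp 2 (ell × ell) ≃ₗᵢ[ℝ] ell := ⟨ShL, ShL_norm⟩

lemma Sh_coeFn (z : WithLp 2 (ell × ell)) : ((Sh z : ell) : ℕ → ℝ) = interleave z.fst z.snd := rfl

end SelfComm
end part4
section part5
namespace SelfComm
open scoped InnerProductSpace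
open ContinuousLinearMap

abbrev H : Type := WithLp 2 (ell × LL)
abbrev H2 : Type := WithLp 2 (ell × ell)

def pCLE : H ≃L[ℝ] ell × LL := WithLp.prodContinuousLinearEquiv 2 ℝ ell LL
def pCLE2 : H2 ≃L[ℝ] ell × ell := WithLp.prodContinuousLinearEquiv 2 ℝ ell ell

def ShC : H2 →L[ℝ] ell := Sh.toLinearIsometry.toContinuousLinearMap
def ShC' : ell →L[ℝ] H2 := Sh.symm.toLinearIsometry.toContinuousLinearMap

/-- the positive operator -/
def A : H →L[ℝ] H :=
  pCLE.symm.toContinuousLinearMap ∘L (ContinuousLinearMap.inr ℝ ell LL) ∘L EPhi ∘L ShC ∘L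
    (pCLE2.symm.toContinuousLinearMap ∘L
      ((ContinuousLinearMap.id ℝ ell).prodMap Psi) ∘L pCLE.toContinuousLinearMap)

/-- its adjoint -/
def B : H →L[ℝ] H :=
  pCLE.symm.toContinuousLinearMap ∘L ((ContinuousLinearMap.id ℝ ell).prodMap EPhi) ∘L
    pCLE2.toContinuousLinearMap ∘L ShC' ∘L Psi ∘L
    (ContinuousLinearMap.snd ℝ ell LL) ∘L pCLE.toContinuousLinearMap

lemma A_apply (z : H) : A z = WithLp.toLp 2 ((0 : ell), EPhi (Sh (WithLp.toLp 2 (z.fst, Psi z.snd)))) := rfl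

lemma B_apply (z : H) :
    B z = WithLp.toLp 2 (((Sh.symm (Psi z.snd) : H2)).fst, EPhi ((Sh.symm (Psi z.snd) : H2).snd)) := rfl

lemma inner_EPhi_left (u : ell) (f : LL) : ⟪EPhi u, f⟫_ℝ = ⟪u, Psi f⟫_ℝ :=
  (ContinuousLinearMap.adjoint_inner_right EPhi u f).symm

lemma hBA : B = ContinuousLinearMap.adjoint A := by
  rw [ContinuousLinearMap.eq_adjoint_iff]
  intro z w
  rw [A_apply, B_apply, WithLp.prod_inner_apply, WithLp.prod_inner_apply]
  set c : ell := Psi z.snd with hc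
  calc ⟪(Sh.symm c : H2).fst, w.fst⟫_ℝ + ⟪EPhi ((Sh.symm c : H2).snd), w.snd⟫_ℝ
      = ⟪(Sh.symm c : H2).fst, w.fst⟫_ℝ + ⟪(Sh.symm c : H2).snd, Psi w.snd⟫_ℝ := by
        rw [inner_EPhi_left]
    _ = ⟪(Sh.symm c : H2), (WithLp.toLp 2 (w.fst, Psi w.snd) : H2)⟫_ℝ := by
        rw [WithLp.prod_inner_apply]; rfl
    _ = ⟪Sh (Sh.symm c), Sh (WithLp.toLp 2 (w.fst, Psi w.snd) : H2)⟫_ℝ := by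
        rw [Sh.inner_map_map]
    _ = ⟪c, Sh (WithLp.toLp 2 (w.fst, Psi w.snd) : H2)⟫_ℝ := by rw [Sh.apply_symm_apply]
    _ = ⟪z.snd, EPhi (Sh (WithLp.toLp 2 (w.fst, Psi w.snd) : H2))⟫_ℝ := by
        rw [hc, Psi, ContinuousLinearMap.adjoint_inner_left]
    _ = ⟪z.fst, (0:ell)⟫_ℝ + ⟪z.snd, EPhi (Sh (WithLp.toLp 2 (w.fst, Psi w.snd) : H2))⟫_ℝ := by
        rw [inner_zero_right, zero_add]

end SelfComm
end part5
section part6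
open SelfComm
open scoped InnerProductSpace

theorem band_projection_onto_l2_component_is_selfCommutator'
    (C : WithLp 2 ((lp (fun _ : ℕ => ℝ) 2) × (Lp ℝ 2 (volume : Measure (Set.Icc (0:ℝ) 1))))
      →L[ℝ]
      WithLp 2 ((lp (fun _ : ℕ => ℝ) 2) × (Lp ℝ 2 (volume : Measure (Set.Icc (0:ℝ) 1)))))
    (hC : ∀ z, WithLp.equiv 2 _ (C z) = ((WithLp.equiv 2 _ z).1, 0)) :
    ∃ A : WithLp 2 ((lp (fun _ : ℕ => ℝ) 2) × (Lp ℝ 2 (volume : Measure (Set.Icc (0:ℝ) 1))))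
      →L[ℝ]
      WithLp 2 ((lp (fun _ : ℕ => ℝ) 2) × (Lp ℝ 2 (volume : Measure (Set.Icc (0:ℝ) 1)))),
      (∀ z, (∀ n, 0 ≤ (WithLp.equiv 2 _ z).1 n) ∧ 0 ≤ (WithLp.equiv 2 _ z).2 →
        (∀ n, 0 ≤ (WithLp.equiv 2 _ (A z)).1 n) ∧ 0 ≤ (WithLp.equiv 2 _ (A z)).2) ∧
      C = ContinuousLinearMap.adjoint A ∘L A - A ∘L ContinuousLinearMap.adjoint A := by
  refine ⟨SelfComm.A, ?_, ?_⟩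
  · intro z hz
    obtain ⟨h1, h2⟩ := hz
    constructor
    · intro n
      have h0 : (WithLp.equiv 2 _ (SelfComm.A z)).1 = (0 : ell) := rfl
      rw [h0, lp.coeFn_zero]
      exact le_rfl
    · show (0:LL) ≤ SelfComm.EPhi (SelfComm.Sh (WithLp.toLp 2 (z.fst, SelfComm.Psi z.snd) : H2))
      rw [SelfComm.EPhi_apply]
      apply Phi_nonneg
      intro m
      have hco : ((SelfComm.Sh (WithLp.toLp 2 (z.fst, SelfComm.Psi z.snd) : H2) : ell) : ℕ → ℝ) m
          = interleave (z.fst : ℕ → ℝ) (SelfComm.Psi z.snd : ℕ → ℝ) m :=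
        congrFun (Sh_coeFn _) m
      rw [hco]
      unfold SelfComm.interleave
      split
      · exact h1 _
      · exact Psi_nonneg h2 _
  · rw [← hBA]
    ext z
    have hCz : C z = (WithLp.toLp 2 (z.fst, (0:LL)) : H) := by
        apply (WithLp.equiv 2 _).injective; rw [hC z]; rfl
    rw [ContinuousLinearMap.sub_apply, ContinuousLinearMap.comp_apply,
      ContinuousLinearMap.comp_apply]
    have e1 : SelfComm.B (SelfComm.A z)
        = (WithLp.toLp 2 (z.fst, SelfComm.EPhi (SelfComm.Psi z.snd)) : H) := by
      rw [SelfComm.B_apply]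
      have h2' : SelfComm.Psi ((SelfComm.A z).snd)
          = SelfComm.Sh (WithLp.toLp 2 (z.fst, SelfComm.Psi z.snd) : H2) := by
        rw [show (SelfComm.A z).snd
            = SelfComm.EPhi (SelfComm.Sh (WithLp.toLp 2 (z.fst, SelfComm.Psi z.snd) : H2)) from rfl,
          SelfComm.Psi_Phi]
      rw [h2', LinearIsometryEquiv.symm_apply_apply]; rfl
    have e2 : SelfComm.A (SelfComm.B z)
        = (WithLp.toLp 2 ((0:ell), SelfComm.EPhi (SelfComm.Psi z.snd)) : H) := by
      rw [SelfComm.A_apply]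
      have h2' : SelfComm.Psi ((SelfComm.B z).snd)
          = (SelfComm.Sh.symm (SelfComm.Psi z.snd) : H2).snd := by
        rw [show (SelfComm.B z).snd
            = SelfComm.EPhi ((SelfComm.Sh.symm (SelfComm.Psi z.snd) : H2).snd) from rfl,
          SelfComm.Psi_Phi]
      rw [h2']
      have h3 : (WithLp.toLp 2 ((SelfComm.B z).fst, (SelfComm.Sh.symm (SelfComm.Psi z.snd) : H2).snd) : H2)
          = SelfComm.Sh.symm (SelfComm.Psi z.snd) := rfl
      rw [h3, LinearIsometryEquiv.apply_symm_apply]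
    rw [e1, e2, hCz]
    apply (WithLp.equiv 2 _).injective
    refine Prod.ext ?_ ?_
    · show z.fst = z.fst - 0
      rw [sub_zero]
    · show (0:LL) = SelfComm.EPhi (SelfComm.Psi z.snd) - SelfComm.EPhi (SelfComm.Psi z.snd)
      rw [sub_self]

end part6

/-- On the Hilbert lattice `H = ℓ² ⊕₂ L²[0,1]`, the band projection `C(x, f) = (x, 0)` onto the
`ℓ²` component is a self-commutator of a positive operator. -/
theorem band_projection_onto_l2_component_is_selfCommutator
    (C : WithLp 2 ((lp (fun _ : ℕ => ℝ) 2) × (Lp ℝ 2 (volume : Measure (Set.Icc (0:ℝ) 1))))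
      →L[ℝ]
      WithLp 2 ((lp (fun _ : ℕ => ℝ) 2) × (Lp ℝ 2 (volume : Measure (Set.Icc (0:ℝ) 1)))))
    (hC : ∀ z, WithLp.equiv 2 _ (C z) = ((WithLp.equiv 2 _ z).1, 0)) :
    ∃ A : WithLp 2 ((lp (fun _ : ℕ => ℝ) 2) × (Lp ℝ 2 (volume : Measure (Set.Icc (0:ℝ) 1))))
      →L[ℝ]
      WithLp 2 ((lp (fun _ : ℕ => ℝ) 2) × (Lp ℝ 2 (volume : Measure (Set.Icc (0:ℝ) 1)))),
      (∀ z, IsPosPairL2 z → IsPosPairL2 (A z)) ∧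
      C = adjoint A ∘L A - A ∘L adjoint A := by
  obtain ⟨A, hA, hEq⟩ := band_projection_onto_l2_component_is_selfCommutator' C hC
  exact ⟨A, fun z hz => hA z hz, hEq⟩
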